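/- The enhanced power graph of the symmetric group S₈ contains an induced 5-cycle on the permutations (1 2 3 4 5), (6 7 8), (1 2), (3 4 5), (6 7), and hence is not a perfect graph. -/

import Mathlib

def powerGraph (G : Type*) [Group G] : SimpleGraph G where
  Adj x y := x ≠ y ∧ ((∃ n : ℤ, n ≠ 0 ∧ y = x ^ n) ∨ ∃ n : ℤ, n ≠ 0 ∧ x = y ^ n)
  symm := ⟨fun _ _ ⟨h, h2⟩ => ⟨h.symm, h2.symm⟩⟩
  loopless := ⟨fun _ ⟨h, _⟩ => h rfl⟩

def enhancedPowerGraph (G : Type*) [Group G] : SimpleGraph G where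
  Adj x y := x ≠ y ∧ ∃ z : G, x ∈ Subgroup.zpowers z ∧ y ∈ Subgroup.zpowers z
  symm := ⟨fun _ _ ⟨h, z, hx, hy⟩ => ⟨h.symm, z, hy, hx⟩⟩
  loopless := ⟨fun _ ⟨h, _⟩ => h rfl⟩


def SimpleGraph.IsPerfect {V : Type*} (G : SimpleGraph V) : Prop :=
  ∀ s : Set V, (G.induce s).chromaticNumber = ((G.induce s).cliqueNum : ℕ∞)

set_option maxRecDepth 40000
set_option maxHeartbeats 1000000

section Aux

open Subgroup

instance isCyclic_zpowers' {G : Type*} [Group G] (z : G) : IsCyclic ↥(Subgroup.zpowers z) := by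
  refine ⟨⟨⟨z, Subgroup.mem_zpowers z⟩, fun x => ?_⟩⟩
  obtain ⟨k, hk⟩ := Subgroup.mem_zpowers_iff.mp x.2
  exact Subgroup.mem_zpowers_iff.mpr ⟨k, by ext; simp [← hk]⟩

/-- If two elements don't commute they aren't adjacent in the enhanced power graph. -/
lemma not_adj_of_not_commute {G : Type*} [Group G] {x y : G}
    (h : x * y ≠ y * x) : ¬ (enhancedPowerGraph G).Adj x y := by
  rintro ⟨-, z, hx, hy⟩
  obtain ⟨m, rfl⟩ := Subgroup.mem_zpowers_iff.mp hx
  obtain ⟨n, rfl⟩ := Subgroup.mem_zpowers_iff.mp hy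
  exact h (((Commute.refl z).zpow_zpow m n).eq)

/-- If `x, y, x*y, 1` are pairwise distinct and all killed by an exponent `n < 4`,
then `x` and `y` don't lie in a common cyclic subgroup. -/
lemma not_adj_of_four {G : Type*} [Group G] [Finite G] [DecidableEq G] {n : ℕ} (hn : 0 < n)
    (hn4 : n < 4) {x y : G} (hx : x ^ n = 1) (hy : y ^ n = 1)
    (hd : (1:G) ≠ x ∧ (1:G) ≠ y ∧ (1:G) ≠ x*y ∧ x ≠ y ∧ x ≠ x*y ∧ y ≠ x*y) :
    ¬ (enhancedPowerGraph G).Adj x y := by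
  obtain ⟨h1x, h1y, h1xy, hxy, hxxy, hyxy⟩ := hd
  rintro ⟨-, z, hxz, hyz⟩
  have : Fintype ↥(zpowers z) := Fintype.ofFinite _
  have hcomm : Commute x y := by
    obtain ⟨m, hm⟩ := Subgroup.mem_zpowers_iff.mp hxz
    obtain ⟨k, hk⟩ := Subgroup.mem_zpowers_iff.mp hyz
    rw [← hm, ← hk]
    exact (Commute.refl z).zpow_zpow m k
  set H := zpowers z
  have hmem : x * y ∈ H := mul_mem hxz hyz
  have hxyn : (x * y) ^ n = 1 := by
    rw [hcomm.mul_pow, hx, hy, one_mul]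
  classical
  have hsub : ({⟨1, one_mem H⟩, ⟨x, hxz⟩, ⟨y, hyz⟩, ⟨x*y, hmem⟩} : Finset H) ⊆
      ({a : H | a ^ n = 1} : Finset H) := by
    intro a ha
    simp only [Finset.mem_insert, Finset.mem_singleton] at ha
    simp only [Finset.mem_filter, Finset.mem_univ, true_and, Set.mem_setOf_eq]
    rcases ha with rfl | rfl | rfl | rfl <;>
      · ext
        simp only [SubmonoidClass.coe_pow, OneMemClass.coe_one]
        first | exact one_pow n | assumption
  have hcard : ({⟨1, one_mem H⟩, ⟨x, hxz⟩, ⟨y, hyz⟩, ⟨x*y, hmem⟩} : Finset H).card = 4 := by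
    rw [Finset.card_insert_of_notMem, Finset.card_insert_of_notMem,
      Finset.card_insert_of_notMem, Finset.card_singleton] <;>
      simp only [Finset.mem_insert, Finset.mem_singleton, Subtype.mk.injEq] <;>
      tauto
  have hle : (({a : H | a ^ n = 1} : Finset H)).card ≤ n :=
    IsCyclic.card_pow_eq_one_le hn
  have := Finset.card_le_card hsub
  omega

lemma cliqueNum_le_two' {V : Type*} (G : SimpleGraph V) (h : G.CliqueFree 3) :
    G.cliqueNum ≤ 2 := by
  have h0 : 0 ∈ {n | ∃ t, G.IsNClique n t} := ⟨∅, SimpleGraph.isNClique_empty.mpr rfl⟩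
  apply csSup_le ⟨0, h0⟩
  rintro n ⟨t, ht⟩
  by_contra hn
  exact (h.mono (by omega)) t ht

namespace EnhS8

open Equiv

def pA : Perm (Fin 8) := c[0, 1, 2, 3, 4]
def pB : Perm (Fin 8) := c[5, 6, 7]
def pC : Perm (Fin 8) := c[0, 1]
def pD : Perm (Fin 8) := c[2, 3, 4]
def pE : Perm (Fin 8) := c[5, 6]

abbrev EG : SimpleGraph (Perm (Fin 8)) := enhancedPowerGraph (Perm (Fin 8))

lemma adjAB : EG.Adj pA pB :=
  ⟨by decide, pA * pB, Subgroup.mem_zpowers_iff.mpr ⟨6, by decide⟩,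
    Subgroup.mem_zpowers_iff.mpr ⟨10, by decide⟩⟩

lemma adjBC : EG.Adj pB pC :=
  ⟨by decide, pB * pC, Subgroup.mem_zpowers_iff.mpr ⟨4, by decide⟩,
    Subgroup.mem_zpowers_iff.mpr ⟨3, by decide⟩⟩

lemma adjCD : EG.Adj pC pD :=
  ⟨by decide, pC * pD, Subgroup.mem_zpowers_iff.mpr ⟨3, by decide⟩,
    Subgroup.mem_zpowers_iff.mpr ⟨4, by decide⟩⟩

lemma adjDE : EG.Adj pD pE :=
  ⟨by decide, pD * pE, Subgroup.mem_zpowers_iff.mpr ⟨4, by decide⟩,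
    Subgroup.mem_zpowers_iff.mpr ⟨3, by decide⟩⟩

lemma adjEA : EG.Adj pE pA :=
  ⟨by decide, pE * pA, Subgroup.mem_zpowers_iff.mpr ⟨5, by decide⟩,
    Subgroup.mem_zpowers_iff.mpr ⟨6, by decide⟩⟩

lemma nadjAC : ¬ EG.Adj pA pC := not_adj_of_not_commute (by decide)
lemma nadjAD : ¬ EG.Adj pA pD := not_adj_of_not_commute (by decide)
lemma nadjBE : ¬ EG.Adj pB pE := not_adj_of_not_commute (by decide)

lemma nadjBD : ¬ EG.Adj pB pD :=
  not_adj_of_four (n := 3) (by norm_num) (by norm_num) (by decide) (by decide) (by decide)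

lemma nadjCE : ¬ EG.Adj pC pE :=
  not_adj_of_four (n := 2) (by norm_num) (by norm_num) (by decide) (by decide) (by decide)

lemma distinct : pA ≠ pB ∧ pA ≠ pC ∧ pA ≠ pD ∧ pA ≠ pE ∧ pB ≠ pC ∧ pB ≠ pD ∧ pB ≠ pE ∧
    pC ≠ pD ∧ pC ≠ pE ∧ pD ≠ pE := by
  refine ⟨?_,?_,?_,?_,?_,?_,?_,?_,?_,?_⟩ <;> decide

lemma part1 : EG.Adj c[0,1,2,3,4] c[5,6,7] ∧ EG.Adj c[5,6,7] c[0,1] ∧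
    EG.Adj c[0,1] c[2,3,4] ∧ EG.Adj c[2,3,4] c[5,6] ∧ EG.Adj c[5,6] c[0,1,2,3,4] ∧
    ¬EG.Adj c[0,1,2,3,4] c[0,1] ∧ ¬EG.Adj c[0,1,2,3,4] c[2,3,4] ∧
    ¬EG.Adj c[5,6,7] c[2,3,4] ∧ ¬EG.Adj c[5,6,7] c[5,6] ∧ ¬EG.Adj c[0,1] c[5,6] :=
  ⟨adjAB, adjBC, adjCD, adjDE, adjEA, nadjAC, nadjAD, nadjBD, nadjBE, nadjCE⟩

attribute [irreducible] pA pB pC pD pE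

def S : Set (Perm (Fin 8)) := {pA, pB, pC, pD, pE}

lemma mem_S_iff {g : Perm (Fin 8)} : g ∈ S ↔ (g = pA ∨ g = pB ∨ g = pC ∨ g = pD ∨ g = pE) := by
  simp [S]

lemma key : ∀ u v w : Perm (Fin 8), u ∈ S → v ∈ S → w ∈ S →
    EG.Adj u v → EG.Adj u w → EG.Adj v w → False := by
  intro u v w hu hv hw huv huw hvw
  rw [mem_S_iff] at hu hv hw
  rcases hu with rfl | rfl | rfl | rfl | rfl <;>
    rcases hv with rfl | rfl | rfl | rfl | rfl <;>
      rcases hw with rfl | rfl | rfl | rfl | rfl <;>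
        first
          | exact EG.loopless.irrefl _ huv | exact EG.loopless.irrefl _ huw | exact EG.loopless.irrefl _ hvw
          | exact nadjAC huv | exact nadjAC huw | exact nadjAC hvw
          | exact nadjAC huv.symm | exact nadjAC huw.symm | exact nadjAC hvw.symm
          | exact nadjAD huv | exact nadjAD huw | exact nadjAD hvw
          | exact nadjAD huv.symm | exact nadjAD huw.symm | exact nadjAD hvw.symm
          | exact nadjBD huv | exact nadjBD huw | exact nadjBD hvw
          | exact nadjBD huv.symm | exact nadjBD huw.symm | exact nadjBD hvw.symm
          | exact nadjBE huv | exact nadjBE huw | exact nadjBE hvw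
          | exact nadjBE huv.symm | exact nadjBE huw.symm | exact nadjBE hvw.symm
          | exact nadjCE huv | exact nadjCE huw | exact nadjCE hvw
          | exact nadjCE huv.symm | exact nadjCE huw.symm | exact nadjCE hvw.symm

lemma hfree : (EG.induce S).CliqueFree 3 := by
  intro t ht
  rw [SimpleGraph.is3Clique_iff] at ht
  obtain ⟨x, y, z, hxy, hxz, hyz, -⟩ := ht
  exact key _ _ _ x.2 y.2 z.2 hxy hxz hyz

lemma pent : ∀ p q r u t : Fin 2, p ≠ q → q ≠ r → r ≠ u → u ≠ t → t ≠ p → False := by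
  intro p q r u t h1 h2 h3 h4 h5
  fin_cases p <;> fin_cases q <;> fin_cases r <;> fin_cases u <;> fin_cases t <;> simp_all

lemma not_perfect : ¬ EG.IsPerfect := by
  intro hperf
  have hperfs := hperf S
  have hclique : (EG.induce S).cliqueNum ≤ 2 := cliqueNum_le_two' _ hfree
  have hcol : (EG.induce S).Colorable 2 := by
    rw [← SimpleGraph.chromaticNumber_le_iff_colorable, hperfs]
    exact_mod_cast Nat.cast_le.mpr hclique
  obtain ⟨C⟩ := hcol
  have ha' : pA ∈ S := mem_S_iff.mpr (by tauto)
  have hb' : pB ∈ S := mem_S_iff.mpr (by tauto)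
  have hc' : pC ∈ S := mem_S_iff.mpr (by tauto)
  have hd' : pD ∈ S := mem_S_iff.mpr (by tauto)
  have he' : pE ∈ S := mem_S_iff.mpr (by tauto)
  have vab : (EG.induce S).Adj ⟨pA, ha'⟩ ⟨pB, hb'⟩ := adjAB
  have vbc : (EG.induce S).Adj ⟨pB, hb'⟩ ⟨pC, hc'⟩ := adjBC
  have vcd : (EG.induce S).Adj ⟨pC, hc'⟩ ⟨pD, hd'⟩ := adjCD
  have vde : (EG.induce S).Adj ⟨pD, hd'⟩ ⟨pE, he'⟩ := adjDE
  have vea : (EG.induce S).Adj ⟨pE, he'⟩ ⟨pA, ha'⟩ := adjEA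
  exact pent _ _ _ _ _ (C.valid vab) (C.valid vbc) (C.valid vcd) (C.valid vde) (C.valid vea)

end EnhS8

end Aux

open Equiv in
/-- The permutations `(1 2 3 4 5), (6 7 8), (1 2), (3 4 5), (6 7)` (written here with
`0`-indexed points) induce a pentagon in the enhanced power graph of `S₈`, which is
therefore not perfect. -/
theorem enhanced_S8_not_perfect :
    (let Γ := enhancedPowerGraph (Equiv.Perm (Fin 8))
     let a : Equiv.Perm (Fin 8) := c[0, 1, 2, 3, 4]
     let b : Equiv.Perm (Fin 8) := c[5, 6, 7]
     let c : Equiv.Perm (Fin 8) := c[0, 1]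
     let d : Equiv.Perm (Fin 8) := c[2, 3, 4]
     let e : Equiv.Perm (Fin 8) := c[5, 6]
     Γ.Adj a b ∧ Γ.Adj b c ∧ Γ.Adj c d ∧ Γ.Adj d e ∧ Γ.Adj e a ∧
       ¬Γ.Adj a c ∧ ¬Γ.Adj a d ∧ ¬Γ.Adj b d ∧ ¬Γ.Adj b e ∧ ¬Γ.Adj c e) ∧
    ¬ (enhancedPowerGraph (Equiv.Perm (Fin 8))).IsPerfect := by
  constructor
  · intro Γ a b c d e
    exact EnhS8.part1
  · exact EnhS8.not_perfect
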